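/- Let Q ∈ ℝ^{n×n} and R ∈ ℝ^{m×m} be positive definite, let x ∈ ℝⁿ with x ≠ 0, let a ∈ ℝ and let b ∈ ℝ^{1×m} be a row vector, and suppose the pointwise CLF condition holds at x: if b = 0 then a < 0. Then the closed-loop Lyapunov derivative under the Sontag-type control law is strictly negative: a + b·u_S < 0, where u_S = −λ R⁻¹ bᵀ with λ = (a + √(a² + (xᵀQx)(bR⁻¹bᵀ)))/(bR⁻¹bᵀ) if b ≠ 0, and u_S = 0 if b = 0. -/

import Mathlib

open Matrix

/-- The Sontag-type distortion factor
`λ = (a + √(a² + q·(b R⁻¹ bᵀ))) / (b R⁻¹ bᵀ)`, where `q = xᵀQx` is passed in as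
a scalar and `b` is a row vector (represented as `Fin m → ℝ`). -/
noncomputable def sontagLambda {m : ℕ} (R : Matrix (Fin m) (Fin m) ℝ)
    (a q : ℝ) (b : Fin m → ℝ) : ℝ :=
  (a + Real.sqrt (a ^ 2 + q * (b ⬝ᵥ R⁻¹ *ᵥ b))) / (b ⬝ᵥ R⁻¹ *ᵥ b)

/-- The Sontag-type control law `u_S = −λ R⁻¹ bᵀ` if `b ≠ 0`, and `u_S = 0` if
`b = 0`. -/
noncomputable def sontagControl {m : ℕ} (R : Matrix (Fin m) (Fin m) ℝ)
    (a q : ℝ) (b : Fin m → ℝ) : Fin m → ℝ :=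
  if b = 0 then 0 else -(sontagLambda R a q b) • (R⁻¹ *ᵥ b)

/-- if `Q, R` are positive definite, `x ≠ 0`, and the pointwise CLF
condition holds at `x` (`b = 0 → a < 0`), then the closed-loop Lyapunov
derivative under the Sontag-type control law is strictly negative:
`a + b·u_S < 0`. -/
theorem stmt_5 {n m : ℕ}
    (Q : Matrix (Fin n) (Fin n) ℝ) (R : Matrix (Fin m) (Fin m) ℝ)
    (hQ : Q.PosDef) (hR : R.PosDef)
    (x : Fin n → ℝ) (hx : x ≠ 0) (a : ℝ) (b : Fin m → ℝ)
    (hclf : b = 0 → a < 0) :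
    a + b ⬝ᵥ sontagControl R a (x ⬝ᵥ Q *ᵥ x) b < 0 := by
  by_cases hb : b = 0
  · simp [sontagControl, hb, hclf hb]
  · have hRinv : (R⁻¹).PosDef := hR.inv
    have hc : 0 < b ⬝ᵥ R⁻¹ *ᵥ b := by
      have := hRinv.dotProduct_mulVec_pos hb
      simpa [dotProduct_comm] using this
    have hq : 0 < x ⬝ᵥ Q *ᵥ x := by
      have := hQ.dotProduct_mulVec_pos hx
      simpa [dotProduct_comm] using this
    have hqc : 0 < (x ⬝ᵥ Q *ᵥ x) * (b ⬝ᵥ R⁻¹ *ᵥ b) := mul_pos hq hc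
    have hsq : a ^ 2 < a ^ 2 + (x ⬝ᵥ Q *ᵥ x) * (b ⬝ᵥ R⁻¹ *ᵥ b) := by linarith
    have key : b ⬝ᵥ sontagControl R a (x ⬝ᵥ Q *ᵥ x) b
        = -(sontagLambda R a (x ⬝ᵥ Q *ᵥ x) b) * (b ⬝ᵥ R⁻¹ *ᵥ b) := by
      simp [sontagControl, hb, dotProduct_smul, smul_eq_mul]
    rw [key, sontagLambda, neg_mul, div_mul_cancel₀ _ hc.ne']
    have habs : |a| < Real.sqrt (a ^ 2 + (x ⬝ᵥ Q *ᵥ x) * (b ⬝ᵥ R⁻¹ *ᵥ b)) := by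
      rw [← Real.sqrt_sq_eq_abs]
      exact Real.sqrt_lt_sqrt (sq_nonneg a) (by linarith)
    have := neg_abs_le a
    linarith [habs, abs_nonneg a]
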